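/- Let G = {g_1,...,g_k} ⊂ R[x] consist of affine-linear polynomials such that S = {x : g_i(x) ≥ 0 ∀i} is nonempty and compact. Then the quadratic module QM(G) is Archimedean. -/

import Mathlib

open MvPolynomial

/-- A polynomial is a sum of squares. -/
def IsSOS {d : ℕ} (p : MvPolynomial (Fin d) ℝ) : Prop :=
  ∃ (n : ℕ) (h : Fin n → MvPolynomial (Fin d) ℝ), p = ∑ i, h i ^ 2


section Farkas

open Finset RealInnerProductSpace

variable {E : Type*} [NormedAddCommGroup E] [NormedSpace ℝ E]

/-- The cone generated by finitely many vectors. -/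
def coneSet {m : ℕ} (v : Fin m → E) : Set E :=
  {x | ∃ c : Fin m → ℝ, (∀ i, 0 ≤ c i) ∧ x = ∑ i, c i • v i}

lemma coneSet_isClosed [FiniteDimensional ℝ E] :
    ∀ {m : ℕ} (v : Fin m → E), IsClosed (coneSet v) := by
  intro m
  induction m with
  | zero =>
    intro v
    have : coneSet v = {(0 : E)} := by
      ext x
      constructor
      · rintro ⟨c, -, rfl⟩; simp
      · rintro rfl; exact ⟨0, fun i => le_refl _, by simp⟩
    rw [this]; exact isClosed_singleton
  | succ m ih =>
    intro v
    by_cases hLI : LinearIndependent ℝ v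
    · -- linear independent case: closed embedding image of orthant
      let φ : (Fin (m + 1) → ℝ) →ₗ[ℝ] E :=
        { toFun := fun c => ∑ i, c i • v i
          map_add' := by
            intro a b; simp [add_smul, Finset.sum_add_distrib]
          map_smul' := by
            intro r a; simp [smul_smul, Finset.smul_sum] }
      have hker : LinearMap.ker φ = ⊥ := by
        rw [LinearMap.ker_eq_bot']
        intro c hc
        have := linearIndependent_iff'.mp hLI Finset.univ c (by simpa [φ] using hc)
        funext i; exact this i (Finset.mem_univ i)
      have hemb := LinearMap.isClosedEmbedding_of_injective hker
      have horth : IsClosed {c : Fin (m+1) → ℝ | ∀ i, 0 ≤ c i} := by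
        have : {c : Fin (m+1) → ℝ | ∀ i, 0 ≤ c i} = ⋂ i, {c | 0 ≤ c i} := by
          ext c; simp
        rw [this]
        exact isClosed_iInter fun i => isClosed_le continuous_const (continuous_apply i)
      have himg : coneSet v = φ '' {c | ∀ i, 0 ≤ c i} := by
        ext x
        constructor
        · rintro ⟨c, hc, rfl⟩; exact ⟨c, hc, rfl⟩
        · rintro ⟨c, hc, rfl⟩; exact ⟨c, hc, rfl⟩
      rw [himg]
      exact hemb.isClosedMap _ horth
    · -- dependent case: union of cones on fewer generators
      obtain ⟨d, hrel, i₀, hi₀⟩ := Fintype.not_linearIndependent_iff.mp hLI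
      have key : ∀ (d : Fin (m+1) → ℝ), (∑ i, d i • v i) = 0 → (∃ i, 0 < d i) →
          coneSet v ⊆ ⋃ p : Fin (m+1), coneSet (v ∘ p.succAbove) := by
        intro d hrel hpos
        rintro x ⟨c, hc, rfl⟩
        have hsne : (Finset.univ.filter fun i => 0 < d i).Nonempty := by
          obtain ⟨i, hi⟩ := hpos; exact ⟨i, by simp [hi]⟩
        obtain ⟨i₁, hi₁mem, hi₁min⟩ :=
          Finset.exists_min_image _ (fun i => c i / d i) hsne
        have hdi₁ : 0 < d i₁ := (Finset.mem_filter.mp hi₁mem).2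
        set t : ℝ := c i₁ / d i₁ with ht
        have ht0 : 0 ≤ t := div_nonneg (hc i₁) hdi₁.le
        set c' : Fin (m+1) → ℝ := fun i => c i - t * d i with hc'
        have hc'nn : ∀ i, 0 ≤ c' i := by
          intro i
          by_cases hdi : 0 < d i
          · have := hi₁min i (by simp [hdi])
            have : t * d i ≤ c i := by
              rw [ht] at this ⊢
              calc c i₁ / d i₁ * d i ≤ c i / d i * d i := by
                    exact mul_le_mul_of_nonneg_right this hdi.le
                _ = c i := div_mul_cancel₀ _ hdi.ne'
            simpa [hc'] using this
          · push_neg at hdi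
            have : 0 ≤ -(t * d i) := by
              rw [neg_nonneg]
              exact mul_nonpos_of_nonneg_of_nonpos ht0 hdi
            have := add_nonneg (hc i) this
            simpa [hc', sub_eq_add_neg] using this
        have hc'i₁ : c' i₁ = 0 := by
          simp [hc', ht, div_mul_cancel₀ _ hdi₁.ne']
        have hsum : ∑ i, c' i • v i = ∑ i, c i • v i := by
          simp only [hc', sub_smul, mul_smul, Finset.sum_sub_distrib]
          rw [← Finset.smul_sum, hrel, smul_zero, sub_zero]
        refine Set.mem_iUnion.mpr ⟨i₁, c' ∘ i₁.succAbove, fun j => hc'nn _, ?_⟩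
        rw [← hsum, Fin.sum_univ_succAbove _ i₁, hc'i₁, zero_smul, zero_add]
        rfl
      have hcover : coneSet v = ⋃ p : Fin (m+1), coneSet (v ∘ p.succAbove) := by
        apply Set.Subset.antisymm
        · rcases lt_trichotomy (d i₀) 0 with h | h | h
          · exact key (-d) (by simpa using hrel) ⟨i₀, by simpa using h⟩
          · exact absurd h hi₀
          · exact key d hrel ⟨i₀, h⟩
        · intro x hx
          obtain ⟨p, c, hc, rfl⟩ := Set.mem_iUnion.mp hx
          refine ⟨Fin.insertNth p 0 c, ?_, ?_⟩
          · intro i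
            induction i using p.succAboveCases with
            | x => simp
            | p j => simpa using hc j
          · rw [Fin.sum_univ_succAbove _ p]
            simp
      rw [hcover]
      exact isClosed_iUnion_of_finite fun p => ih _

variable {F : Type*} [NormedAddCommGroup F] [InnerProductSpace ℝ F] [FiniteDimensional ℝ F]

/-- Farkas lemma, cone form. -/
lemma mem_coneSet_of_dual {m : ℕ} (v : Fin m → F) (u : F)
    (h : ∀ y : F, (∀ i, 0 ≤ ⟪v i, y⟫) → 0 ≤ ⟪u, y⟫) : u ∈ coneSet v := by
  by_contra hu
  set K : ConvexCone ℝ F :=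
    { carrier := coneSet v
      smul_mem' := by
        rintro r hr x ⟨c, hc, rfl⟩
        exact ⟨fun i => r * c i, fun i => mul_nonneg hr.le (hc i),
          by simp [Finset.smul_sum, smul_smul]⟩
      add_mem' := by
        rintro x ⟨c, hc, rfl⟩ y ⟨c', hc', rfl⟩
        exact ⟨c + c', fun i => add_nonneg (hc i) (hc' i),
          by simp [add_smul, Finset.sum_add_distrib]⟩ } with hK
  have hne : (K : Set F).Nonempty := ⟨0, ⟨0, fun i => le_refl _, by simp⟩⟩
  obtain ⟨y, hy1, hy2⟩ :=
    ProperCone.hyperplane_separation' (C := ⟨{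
        carrier := coneSet v
        zero_mem' := ⟨0, fun i => le_refl _, by simp⟩
        add_mem' := fun hx hy => K.add_mem' hx hy
        smul_mem' := by
          rintro r x ⟨c, hc, rfl⟩
          exact ⟨fun i => (r:ℝ) * c i, fun i => mul_nonneg r.2 (hc i),
            by rw [Finset.smul_sum]; exact Finset.sum_congr rfl fun i _ => by rw [mul_smul]; rfl⟩ }, coneSet_isClosed v⟩) hu
  have : 0 ≤ ⟪u, y⟫ := by
    apply h
    intro i
    have hvi : v i ∈ K := by
      refine ⟨fun i' => if i' = i then 1 else 0, fun i' => by positivity, ?_⟩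
      simp [ite_smul]
    simpa [real_inner_comm] using hy1 _ hvi
  linarith

/-- Farkas lemma, coordinates form. -/
lemma farkas_coords {n m : ℕ} (v : Fin m → (Fin n → ℝ)) (u : Fin n → ℝ)
    (h : ∀ y : Fin n → ℝ, (∀ i, 0 ≤ ∑ j, v i j * y j) → 0 ≤ ∑ j, u j * y j) :
    ∃ c : Fin m → ℝ, (∀ i, 0 ≤ c i) ∧ ∀ j, u j = ∑ i, c i * v i j := by
  set e := (EuclideanSpace.equiv (Fin n) ℝ).symm with he
  have hinner : ∀ a b : Fin n → ℝ, ⟪e a, e b⟫ = ∑ j, a j * b j := by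
    intro a b
    simp [PiLp.inner_apply, he]
    exact Finset.sum_congr rfl fun j _ => mul_comm _ _
  obtain ⟨c, hc, hcu⟩ := mem_coneSet_of_dual (fun i => e (v i)) (e u) (by
    intro y hy
    have h1 := h (e.symm y) (fun i => by
      have := hinner (v i) (e.symm y); rw [e.apply_symm_apply] at this; rw [← this]; exact hy i)
    have := hinner u (e.symm y); rw [e.apply_symm_apply] at this; rw [this]; exact h1)
  refine ⟨c, hc, fun j => ?_⟩
  have : u = e.symm (∑ i, c i • e (v i)) := by rw [← hcu, e.symm_apply_apply]
  rw [this]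
  rw [map_sum]
  simp [Finset.sum_apply, e]

/-- Affine Farkas lemma: if the system `b i + ⟨a i, x⟩ ≥ 0` is consistent and
`c + ⟨ℓ, x⟩ ≥ 0` on its solution set, then the latter is a nonnegative combination
of `1` and the former. -/
lemma farkas_affine {d k : ℕ} (a : Fin k → Fin d → ℝ) (b : Fin k → ℝ)
    (x₀ : Fin d → ℝ) (hx₀ : ∀ i, 0 ≤ b i + ∑ j, a i j * x₀ j)
    (l : Fin d → ℝ) (c : ℝ)
    (hl : ∀ x : Fin d → ℝ, (∀ i, 0 ≤ b i + ∑ j, a i j * x j) → 0 ≤ c + ∑ j, l j * x j) :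
    ∃ (lam0 : ℝ) (lam : Fin k → ℝ), 0 ≤ lam0 ∧ (∀ i, 0 ≤ lam i) ∧
      c = lam0 + ∑ i, lam i * b i ∧ ∀ j, l j = ∑ i, lam i * a i j := by
  set v : Fin (k+1) → (Fin (d+1) → ℝ) :=
    Fin.cons (Fin.cons 1 0) (fun i => Fin.cons (b i) (a i)) with hv
  set u : Fin (d+1) → ℝ := Fin.cons c l with hu
  have hdual : ∀ y : Fin (d+1) → ℝ, (∀ i, 0 ≤ ∑ j, v i j * y j) → 0 ≤ ∑ j, u j * y j := by
    intro y hy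
    set y0 : ℝ := y 0 with hy0
    set y' : Fin d → ℝ := fun j => y j.succ with hy'
    have h0 : 0 ≤ y0 := by simpa [hv, Fin.sum_univ_succ] using hy 0
    have hi : ∀ i, 0 ≤ b i * y0 + ∑ j, a i j * y' j := by
      intro i
      simpa [hv, Fin.sum_univ_succ] using hy i.succ
    have goal : 0 ≤ c * y0 + ∑ j, l j * y' j := by
      rcases h0.lt_or_eq with hpos | hzero
      · have hx := hl (fun j => y' j / y0) ?_
        · have : 0 ≤ (c + ∑ j, l j * (y' j / y0)) * y0 := mul_nonneg hx hpos.le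
          calc (0:ℝ) ≤ (c + ∑ j, l j * (y' j / y0)) * y0 := this
            _ = c * y0 + ∑ j, l j * y' j := by
                rw [add_mul, Finset.sum_mul]
                congr 1
                apply Finset.sum_congr rfl
                intro j _
                field_simp
        · intro i
          have h1 : 0 ≤ (b i * y0 + ∑ j, a i j * y' j) / y0 :=
            div_nonneg (hi i) hpos.le
          have : (b i * y0 + ∑ j, a i j * y' j) / y0
              = b i + ∑ j, a i j * (y' j / y0) := by
            rw [add_div, mul_div_cancel_right₀ _ hpos.ne', Finset.sum_div]
            congr 1
            apply Finset.sum_congr rfl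
            intro j _
            ring
          rw [this] at h1
          exact h1
      · rw [← hzero]
        simp only [mul_zero, zero_add]
        by_contra hL
        push_neg at hL
        set L : ℝ := ∑ j, l j * y' j with hLdef
        set B : ℝ := c + ∑ j, l j * x₀ j with hB
        have hB0 : 0 ≤ B := hl x₀ hx₀
        set t : ℝ := (B + 1) / (-L) with ht
        have ht0 : 0 ≤ t := div_nonneg (by linarith) (by linarith)
        have hx := hl (fun j => x₀ j + t * y' j) ?_
        · have hsum : ∑ j, l j * (x₀ j + t * y' j)
              = (∑ j, l j * x₀ j) + t * L := by
            rw [hLdef, Finset.mul_sum, ← Finset.sum_add_distrib]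
            apply Finset.sum_congr rfl
            intro j _
            ring
          rw [hsum] at hx
          have h2 : t * -L = B + 1 := div_mul_cancel₀ _ (by linarith)
          have h3 : t * -L = -(t * L) := by ring
          have htL : t * L = -(B + 1) := by linarith
          rw [htL] at hx
          linarith [hx, hB]
        · intro i
          have h1 : 0 ≤ ∑ j, a i j * y' j := by
            have := hi i
            rw [← hzero] at this
            simpa using this
          have hsum : ∑ j, a i j * (x₀ j + t * y' j)
              = (∑ j, a i j * x₀ j) + t * ∑ j, a i j * y' j := by
            rw [Finset.mul_sum, ← Finset.sum_add_distrib]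
            apply Finset.sum_congr rfl
            intro j _
            ring
          rw [hsum]
          have := hx₀ i
          nlinarith
    have : ∑ j, u j * y j = c * y0 + ∑ j, l j * y' j := by
      simp [hu, Fin.sum_univ_succ, hy0, hy']
    rw [this]
    exact goal
  obtain ⟨mu, hmu, hmueq⟩ := farkas_coords v u hdual
  refine ⟨mu 0, fun i => mu i.succ, hmu 0, fun i => hmu _, ?_, ?_⟩
  · have := hmueq 0
    simpa [hu, hv, Fin.sum_univ_succ] using this
  · intro j
    have := hmueq j.succ
    simpa [hu, hv, Fin.sum_univ_succ] using this

end Farkas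

open Finset

lemma monomial_classify {d : ℕ} (m : Fin d →₀ ℕ) (h : (m.sum fun _ e => e) ≤ 1) :
    m = 0 ∨ ∃ j, m = Finsupp.single j 1 := by
  by_cases hm : m = 0
  · exact Or.inl hm
  · right
    obtain ⟨j, hj⟩ := Finsupp.ne_iff.mp hm
    rw [Finsupp.coe_zero, Pi.zero_apply] at hj
    have hjs : j ∈ m.support := Finsupp.mem_support_iff.mpr hj
    have hle : m j ≤ m.sum fun _ e => e := by
      rw [Finsupp.sum]
      exact Finset.single_le_sum (fun i _ => Nat.zero_le _) hjs
    have hmj : m j = 1 := le_antisymm (hle.trans h) (Nat.one_le_iff_ne_zero.mpr hj)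
    have hrest : ∀ j' ≠ j, m j' = 0 := by
      intro j' hj'
      by_contra hne
      have hj's : j' ∈ m.support := Finsupp.mem_support_iff.mpr hne
      have hpair : ({j', j} : Finset (Fin d)) ⊆ m.support := by
        intro i hi
        rcases Finset.mem_insert.mp hi with rfl | hi
        · exact hj's
        · rw [Finset.mem_singleton.mp hi]; exact hjs
      have h2 : ∑ i ∈ ({j', j} : Finset (Fin d)), m i ≤ ∑ i ∈ m.support, m i :=
        Finset.sum_le_sum_of_subset hpair
      rw [Finset.sum_pair hj'] at h2
      rw [Finsupp.sum] at h
      omega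
    refine ⟨j, ?_⟩
    ext j'
    by_cases hj' : j' = j
    · subst hj'; simp [hmj]
    · simp [Finsupp.single_apply, Ne.symm hj', hrest j' hj']

lemma eq_affine_of_totalDegree_le_one {d : ℕ} (p : MvPolynomial (Fin d) ℝ)
    (h : p.totalDegree ≤ 1) :
    p = C (coeff 0 p) + ∑ j, C (coeff (Finsupp.single j 1) p) * X j := by
  apply MvPolynomial.ext
  intro m
  simp only [coeff_add, coeff_C, coeff_sum, coeff_C_mul, coeff_X']
  by_cases hm0 : m = 0
  · subst hm0
    simp [Finsupp.single_eq_zero]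
  · by_cases hsing : ∃ j0, m = Finsupp.single j0 1
    · obtain ⟨j0, rfl⟩ := hsing
      have hcond : ∀ j : Fin d,
          ((Finsupp.single j 1 : Fin d →₀ ℕ) = Finsupp.single j0 1) = (j = j0) :=
        fun j => propext (Finsupp.single_left_inj one_ne_zero)
      simp only [hcond, mul_ite, mul_one, mul_zero]
      rw [Finset.sum_ite_eq' Finset.univ j0 (fun j => coeff (Finsupp.single j 1) p)]
      rw [if_neg (show ¬(0 : Fin d →₀ ℕ) = Finsupp.single j0 1 by
        simp [eq_comm, Finsupp.single_eq_zero])]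
      simp
    · have hcoeff : coeff m p = 0 := by
        by_contra hne
        have hmem : m ∈ p.support := mem_support_iff.mpr hne
        have : (m.sum fun _ e => e) ≤ 1 :=
          le_trans (MvPolynomial.le_totalDegree hmem) h
        rcases monomial_classify m this with h0 | hs
        · exact hm0 h0
        · exact hsing hs
      rw [hcoeff, if_neg (fun hc => hm0 hc.symm)]
      have hz : ∀ j : Fin d,
          (if (Finsupp.single j 1 : Fin d →₀ ℕ) = m then (1:ℝ) else 0) = 0 :=
        fun j => if_neg (fun hc => hsing ⟨j, hc.symm⟩)
      simp [hz]

lemma isSOS_add {d : ℕ} {p q : MvPolynomial (Fin d) ℝ} (hp : IsSOS p) (hq : IsSOS q) :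
    IsSOS (p + q) := by
  obtain ⟨n, f, rfl⟩ := hp
  obtain ⟨m, e, rfl⟩ := hq
  refine ⟨n + m, Fin.append f e, ?_⟩
  rw [Fin.sum_univ_add]
  congr 1
  · exact Finset.sum_congr rfl fun i _ => by rw [Fin.append_left]
  · exact Finset.sum_congr rfl fun i _ => by rw [Fin.append_right]

lemma isSOS_zero {d : ℕ} : IsSOS (0 : MvPolynomial (Fin d) ℝ) := ⟨0, ![], by simp⟩

lemma isSOS_sum {d : ℕ} {ι : Type*} [DecidableEq ι] (s : Finset ι) (f : ι → MvPolynomial (Fin d) ℝ)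
    (h : ∀ i ∈ s, IsSOS (f i)) : IsSOS (∑ i ∈ s, f i) := by
  induction s using Finset.induction_on with
  | empty => simpa using isSOS_zero
  | insert _ _ hx ih =>
    rw [Finset.sum_insert hx]
    exact isSOS_add (h _ (Finset.mem_insert_self _ _))
      (ih fun i hi => h i (Finset.mem_insert_of_mem hi))

lemma isSOS_C_mul_sq {d : ℕ} {a : ℝ} (ha : 0 ≤ a) (p : MvPolynomial (Fin d) ℝ) :
    IsSOS (C a * p ^ 2) := by
  refine ⟨1, ![C (Real.sqrt a) * p], ?_⟩
  rw [Fin.sum_univ_one]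
  simp only [Matrix.cons_val_zero, mul_pow, ← map_pow, Real.sq_sqrt ha]

lemma isSOS_C {d : ℕ} {a : ℝ} (ha : 0 ≤ a) : IsSOS (C a : MvPolynomial (Fin d) ℝ) := by
  simpa using isSOS_C_mul_sq ha (1 : MvPolynomial (Fin d) ℝ)

/-- if the g_i are affine-linear and S = {x : g_i(x) ≥ 0 ∀ i} is
nonempty and compact, then the quadratic module QM(g) is Archimedean, i.e.
N - Σ x_j² ∈ QM(g) for some positive integer N. -/
theorem quadraticModule_archimedean_of_linear_compact
    {d k : ℕ} (g : Fin k → MvPolynomial (Fin d) ℝ)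
    (hlin : ∀ i, (g i).totalDegree ≤ 1)
    (S : Set (Fin d → ℝ)) (hS : S = {x | ∀ i, 0 ≤ eval x (g i)})
    (hne : S.Nonempty) (hcpt : IsCompact S) :
    ∃ (N : ℕ), 0 < N ∧
      ∃ (σ₀ : MvPolynomial (Fin d) ℝ) (σ : Fin k → MvPolynomial (Fin d) ℝ),
        IsSOS σ₀ ∧ (∀ i, IsSOS (σ i)) ∧
        (C (N : ℝ) - ∑ j : Fin d, X j ^ 2) = σ₀ + ∑ i, σ i * g i := by
  classical
  set a : Fin k → Fin d → ℝ := fun i j => coeff (Finsupp.single j 1) (g i) with ha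
  set b : Fin k → ℝ := fun i => coeff 0 (g i) with hb
  have hgi : ∀ i, g i = C (b i) + ∑ j, C (a i j) * X j :=
    fun i => eq_affine_of_totalDegree_le_one _ (hlin i)
  have heval : ∀ (x : Fin d → ℝ) i, eval x (g i) = b i + ∑ j, a i j * x j := by
    intro x i
    conv_lhs => rw [hgi i]
    simp
  have hmem : ∀ x : Fin d → ℝ, x ∈ S ↔ ∀ i, 0 ≤ b i + ∑ j, a i j * x j := by
    intro x
    rw [hS]
    simp only [Set.mem_setOf_eq, heval]
  -- a bound on S
  obtain ⟨r, hr⟩ := hcpt.isBounded.subset_closedBall 0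
  set c : ℝ := max r 1 with hcdef
  have hc : 0 < c := lt_of_lt_of_le one_pos (le_max_right _ _)
  have hbound : ∀ x ∈ S, ∀ j, |x j| ≤ c := by
    intro x hx j
    have h1 : ‖x‖ ≤ r := by
      have := hr hx
      rwa [Metric.mem_closedBall, dist_zero_right] at this
    calc |x j| = ‖x j‖ := (Real.norm_eq_abs _).symm
      _ ≤ ‖x‖ := norm_le_pi_norm x j
      _ ≤ r := h1
      _ ≤ c := le_max_left _ _
  obtain ⟨x₀, hx₀S⟩ := hne
  have hx₀ : ∀ i, 0 ≤ b i + ∑ j, a i j * x₀ j := (hmem x₀).mp hx₀S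
  have hsumite : ∀ (s : ℝ) (x : Fin d → ℝ) (j : Fin d),
      ∑ j', (if j' = j then s else 0) * x j' = s * x j := by
    intro s x j
    simp [ite_mul]
  -- Farkas data for c - x_j
  have H1 : ∀ j : Fin d, ∃ (lam0 : ℝ) (lam : Fin k → ℝ), 0 ≤ lam0 ∧ (∀ i, 0 ≤ lam i) ∧
      c = lam0 + ∑ i, lam i * b i ∧
      ∀ j', (if j' = j then (-1:ℝ) else 0) = ∑ i, lam i * a i j' := by
    intro j
    apply farkas_affine a b x₀ hx₀
    intro x hx
    rw [hsumite]
    have := hbound x ((hmem x).mpr hx) j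
    rw [abs_le] at this
    linarith [this.2]
  have H2 : ∀ j : Fin d, ∃ (mu0 : ℝ) (mu : Fin k → ℝ), 0 ≤ mu0 ∧ (∀ i, 0 ≤ mu i) ∧
      c = mu0 + ∑ i, mu i * b i ∧
      ∀ j', (if j' = j then (1:ℝ) else 0) = ∑ i, mu i * a i j' := by
    intro j
    apply farkas_affine a b x₀ hx₀
    intro x hx
    rw [hsumite]
    have := hbound x ((hmem x).mpr hx) j
    rw [abs_le] at this
    linarith [this.1]
  choose lam0 lam hlam0 hlam hlamc hlama using H1
  choose mu0 mu hmu0 hmu hmuc hmua using H2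
  -- reconstruction of polynomial combinations
  have combo : ∀ (t0 : ℝ) (t : Fin k → ℝ),
      C t0 + ∑ i, C (t i) * g i
        = C (t0 + ∑ i, t i * b i) + ∑ j', C (∑ i, t i * a i j') * X j' := by
    intro t0 t
    have h1 : ∀ i, C (t i) * g i
        = C (t i * b i) + ∑ j', C (t i * a i j') * X j' := by
      intro i
      rw [hgi i, mul_add, Finset.mul_sum, map_mul]
      congr 1
      exact Finset.sum_congr rfl fun j' _ => by rw [map_mul, mul_assoc]
    have h2 : ∀ j' : Fin d, (C (∑ i, t i * a i j') : MvPolynomial (Fin d) ℝ) * X j'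
        = ∑ i, C (t i * a i j') * X j' := by
      intro j'
      rw [map_sum C (fun i => t i * a i j') Finset.univ, Finset.sum_mul]
    conv_rhs => rw [map_add, map_sum C (fun i => t i * b i) Finset.univ,
      Finset.sum_congr rfl fun j' _ => h2 j']
    conv_lhs => rw [Finset.sum_congr rfl fun i _ => h1 i, Finset.sum_add_distrib,
      Finset.sum_comm]
    ring
  have hP : ∀ j : Fin d, C c - X j = C (lam0 j) + ∑ i, C (lam j i) * g i := by
    intro j
    rw [combo (lam0 j) (lam j), ← hlamc j]
    have hx : ∀ j' : Fin d, C (∑ i, lam j i * a i j') * X j'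
        = (if j' = j then -X j' else 0) := by
      intro j'
      rw [← hlama j j']
      split
      · simp
      · simp
    rw [Finset.sum_congr rfl fun j' _ => hx j',
      Finset.sum_ite_eq' Finset.univ j fun j' => -X j']
    simp [sub_eq_add_neg]
  have hQ : ∀ j : Fin d, C c + X j = C (mu0 j) + ∑ i, C (mu j i) * g i := by
    intro j
    rw [combo (mu0 j) (mu j), ← hmuc j]
    have hx : ∀ j' : Fin d, C (∑ i, mu j i * a i j') * X j'
        = (if j' = j then X j' else 0) := by
      intro j'
      rw [← hmua j j']
      split
      · simp
      · simp
    rw [Finset.sum_congr rfl fun j' _ => hx j',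
      Finset.sum_ite_eq' Finset.univ j fun j' => X j']
    simp
  -- choose N
  set N : ℕ := ⌈(d:ℝ) * c^2⌉₊ + 1 with hN
  have hNpos : 0 < N := Nat.succ_pos _
  have hNge : (d:ℝ) * c^2 ≤ (N:ℝ) := by
    have := Nat.le_ceil ((d:ℝ) * c^2)
    push_cast [hN]
    linarith
  -- define the sos certificate
  set σ₀ : MvPolynomial (Fin d) ℝ :=
    C ((N:ℝ) - d * c^2) + ∑ j, (C (lam0 j / (2*c)) * (C c + X j)^2
      + C (mu0 j / (2*c)) * (C c - X j)^2) with hσ₀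
  set σ : Fin k → MvPolynomial (Fin d) ℝ := fun i =>
    ∑ j, (C (lam j i / (2*c)) * (C c + X j)^2
      + C (mu j i / (2*c)) * (C c - X j)^2) with hσ
  refine ⟨N, hNpos, σ₀, σ, ?_, ?_, ?_⟩
  · apply isSOS_add
    · exact isSOS_C (by linarith)
    · apply isSOS_sum
      intro j _
      exact isSOS_add
        (isSOS_C_mul_sq (div_nonneg (hlam0 j) (by linarith)) _)
        (isSOS_C_mul_sq (div_nonneg (hmu0 j) (by linarith)) _)
  · intro i
    apply isSOS_sum
    intro j _
    exact isSOS_add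
      (isSOS_C_mul_sq (div_nonneg (hlam j i) (by linarith)) _)
      (isSOS_C_mul_sq (div_nonneg (hmu j i) (by linarith)) _)
  · -- the main identity
    have h2c : (C (1/(2*c)) : MvPolynomial (Fin d) ℝ) * (C c * 2) = 1 := by
      rw [show ((2:MvPolynomial (Fin d) ℝ)) = C (2:ℝ) from (map_ofNat C 2).symm,
        ← map_mul, ← map_mul, ← map_one (C : ℝ →+* MvPolynomial (Fin d) ℝ)]
      congr 1
      field_simp
    have key : ∀ j : Fin d,
        (C (lam0 j / (2*c)) * (C c + X j)^2 + C (mu0 j / (2*c)) * (C c - X j)^2)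
        + ∑ i, (C (lam j i / (2*c)) * (C c + X j)^2
            + C (mu j i / (2*c)) * (C c - X j)^2) * g i
        = C (c^2) - X j ^ 2 := by
      intro j
      have e1 : ∑ i, (C (lam j i / (2*c)) * (C c + X j)^2
            + C (mu j i / (2*c)) * (C c - X j)^2) * g i
          = C (1/(2*c)) * ((C c + X j)^2 * (∑ i, C (lam j i) * g i)
            + (C c - X j)^2 * (∑ i, C (mu j i) * g i)) := by
        have hterm : ∀ i, (C (lam j i / (2*c)) * (C c + X j)^2
              + C (mu j i / (2*c)) * (C c - X j)^2) * g i
            = C (1/(2*c)) * ((C c + X j)^2 * (C (lam j i) * g i))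
              + C (1/(2*c)) * ((C c - X j)^2 * (C (mu j i) * g i)) := by
          intro i
          have r1 : (C (lam j i / (2*c)) : MvPolynomial (Fin d) ℝ)
              = C (1/(2*c)) * C (lam j i) := by
            rw [← map_mul]; congr 1; ring
          have r2 : (C (mu j i / (2*c)) : MvPolynomial (Fin d) ℝ)
              = C (1/(2*c)) * C (mu j i) := by
            rw [← map_mul]; congr 1; ring
          rw [r1, r2]; ring
        rw [Finset.sum_congr rfl fun i _ => hterm i, Finset.sum_add_distrib,
          ← Finset.mul_sum, ← Finset.mul_sum, ← Finset.mul_sum, ← Finset.mul_sum,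
          ← mul_add]
      have e2 : ∑ i, C (lam j i) * g i = (C c - X j) - C (lam0 j) := by
        linear_combination -(hP j)
      have e3 : ∑ i, C (mu j i) * g i = (C c + X j) - C (mu0 j) := by
        linear_combination -(hQ j)
      rw [e1, e2, e3]
      have r1 : (C (lam0 j / (2*c)) : MvPolynomial (Fin d) ℝ)
          = C (1/(2*c)) * C (lam0 j) := by rw [← map_mul]; congr 1; ring
      have r2 : (C (mu0 j / (2*c)) : MvPolynomial (Fin d) ℝ)
          = C (1/(2*c)) * C (mu0 j) := by rw [← map_mul]; congr 1; ring
      have rc : (C (c^2) : MvPolynomial (Fin d) ℝ) = (C c)^2 := by rw [map_pow]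
      rw [r1, r2, rc]
      linear_combination (((C c)^2 - X j^2) : MvPolynomial (Fin d) ℝ) * h2c
    have hswap : ∑ i, σ i * g i
        = ∑ j, ∑ i, (C (lam j i / (2*c)) * (C c + X j)^2
            + C (mu j i / (2*c)) * (C c - X j)^2) * g i := by
      simp only [hσ, Finset.sum_mul]
      rw [Finset.sum_comm]
    have hCN : (C ((N:ℝ)) : MvPolynomial (Fin d) ℝ)
        = C ((N:ℝ) - d * c^2) + ∑ j : Fin d, C (c^2) := by
      rw [Finset.sum_const, Finset.card_univ, Fintype.card_fin, nsmul_eq_mul,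
        ← map_natCast (C : ℝ →+* MvPolynomial (Fin d) ℝ), ← map_mul, ← map_add]
      congr 1
      ring
    have hmerge : (∑ j, (C (lam0 j / (2*c)) * (C c + X j)^2
          + C (mu0 j / (2*c)) * (C c - X j)^2))
        + (∑ j, ∑ i, (C (lam j i / (2*c)) * (C c + X j)^2
          + C (mu j i / (2*c)) * (C c - X j)^2) * g i)
        = ∑ j, (C (c^2) - X j ^ 2) := by
      rw [← Finset.sum_add_distrib]
      exact Finset.sum_congr rfl fun j _ => key j
    rw [hσ₀, hswap, add_assoc, hmerge, Finset.sum_sub_distrib, hCN]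
    ring
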